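/- Let δ be a limit ordinal, e ⊆ δ, and E a set of ordinals, and define gl(e, E) = {sup(α ∩ E) : α ∈ e and α > min(E)}. (a) If e is a club of δ and E ∩ δ is a club of δ, then gl(e, E) is a club of δ with otp(gl(e, E)) ≤ otp(e). (b) If e is closed in δ (not necessarily unbounded) and E ∩ δ is a club of δ, then gl(e, E) is closed in δ and otp(gl(e, E)) ≤ otp(e). -/

import Mathlib

noncomputable section

/-- The order type of a set of ordinals (meaningful when `C` is small, i.e. bounded). -/
noncomputable def otp (C : Set Ordinal.{0}) : Ordinal.{0} := by
  classical
  exact if h : Small.{0} C then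
    letI := h
    haveI : IsWellOrder (Shrink C)
        (fun x y => ((equivShrink C).symm x : Ordinal) < ((equivShrink C).symm y : Ordinal)) :=
      RelEmbedding.isWellOrder
        (⟨⟨fun x => ((equivShrink C).symm x : Ordinal),
            fun a b hab => (equivShrink C).symm.injective (Subtype.coe_injective hab)⟩,
          Iff.rfl⟩ :
          (fun x y : Shrink C =>
              ((equivShrink C).symm x : Ordinal) < ((equivShrink C).symm y : Ordinal)) ↪r
            ((· < ·) : Ordinal → Ordinal → Prop))
    Ordinal.type
      (fun x y : Shrink C =>
        ((equivShrink C).symm x : Ordinal) < ((equivShrink C).symm y : Ordinal))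
  else 0

/-- `C` is closed in `δ`: any supremum of a nonempty subset of `C` that is `< δ` lies in `C`. -/
def IsClosedIn (C : Set Ordinal.{0}) (δ : Ordinal.{0}) : Prop :=
  ∀ s ⊆ C, s.Nonempty → sSup s < δ → sSup s ∈ C

/-- `C` is a club (closed unbounded) subset of `δ`. -/
def IsClubIn (C : Set Ordinal.{0}) (δ : Ordinal.{0}) : Prop :=
  C ⊆ Set.Iio δ ∧ (∀ β < δ, ∃ γ ∈ C, β ≤ γ) ∧ IsClosedIn C δ

/-- `S` is stationary in `δ`: it meets every club of `δ`. -/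
def IsStationaryIn (S : Set Ordinal.{0}) (δ : Ordinal.{0}) : Prop :=
  ∀ C, IsClubIn C δ → (S ∩ C).Nonempty

/-- The accumulation points of `C` that belong to `C`. -/
def accSet (C : Set Ordinal.{0}) : Set Ordinal.{0} :=
  {β ∈ C | β = sSup (C ∩ Set.Iio β)}

/-- The non-accumulation points of `C`. -/
def naccSet (C : Set Ordinal.{0}) : Set Ordinal.{0} := C \ accSet C

/-- `S_κ^δ`: the set of ordinals below `δ` of cofinality `κ`. -/
def cofSet (κ : Cardinal.{0}) (δ : Ordinal.{0}) : Set Ordinal.{0} :=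
  {α | α < δ ∧ α.cof = κ}

/-- The `gl` operation of Shelah: `gl(e,E) = {sup(α ∩ E) : α ∈ e, α > min E}`. -/
def gl (e E : Set Ordinal.{0}) : Set Ordinal.{0} :=
  {x | ∃ α ∈ e, sInf E < α ∧ x = sSup (E ∩ Set.Iio α)}


lemma otp_le_otp {C D : Set Ordinal.{0}} (hC : Small.{0} C) (hD : Small.{0} D)
    (f : C → D) (hf : StrictMono f) : otp C ≤ otp D := by
  unfold otp
  rw [dif_pos hC, dif_pos hD]
  haveI := hC; haveI := hD
  haveI : IsWellOrder (Shrink C)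
      (fun x y => ((equivShrink C).symm x : Ordinal) < ((equivShrink C).symm y : Ordinal)) :=
    RelEmbedding.isWellOrder
      (⟨⟨fun x => ((equivShrink C).symm x : Ordinal),
          fun a b hab => (equivShrink C).symm.injective (Subtype.coe_injective hab)⟩,
        Iff.rfl⟩ :
        (fun x y : Shrink C =>
            ((equivShrink C).symm x : Ordinal) < ((equivShrink C).symm y : Ordinal)) ↪r
          ((· < ·) : Ordinal → Ordinal → Prop))
  haveI : IsWellOrder (Shrink D)
      (fun x y => ((equivShrink D).symm x : Ordinal) < ((equivShrink D).symm y : Ordinal)) :=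
    RelEmbedding.isWellOrder
      (⟨⟨fun x => ((equivShrink D).symm x : Ordinal),
          fun a b hab => (equivShrink D).symm.injective (Subtype.coe_injective hab)⟩,
        Iff.rfl⟩ :
        (fun x y : Shrink D =>
            ((equivShrink D).symm x : Ordinal) < ((equivShrink D).symm y : Ordinal)) ↪r
          ((· < ·) : Ordinal → Ordinal → Prop))
  refine RelEmbedding.ordinal_type_le
    ⟨⟨fun x => equivShrink D (f ((equivShrink C).symm x)), ?_⟩, ?_⟩
  · intro a b h
    simp only at h
    exact (equivShrink C).symm.injective (hf.injective ((equivShrink D).injective h))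
  · intro a b
    change ((equivShrink D).symm (equivShrink D (f ((equivShrink C).symm a))) : Ordinal) <
      ((equivShrink D).symm (equivShrink D (f ((equivShrink C).symm b))) : Ordinal) ↔ _
    simp only [Function.Embedding.coeFn_mk, Equiv.symm_apply_apply]
    constructor
    · intro h
      have := hf.lt_iff_lt.mp (Subtype.coe_lt_coe.mp h)
      exact Subtype.coe_lt_coe.mpr this
    · intro h
      exact Subtype.coe_lt_coe.mpr (hf (Subtype.coe_lt_coe.mp h))

/-- Observation 0.9: `gl(e,E)` of a club is a club of no larger order type;
if `e` is merely closed, `gl(e,E)` is closed of no larger order type. -/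
theorem stmt_12 (δ : Ordinal) (hδ : Order.IsSuccLimit δ) (e E : Set Ordinal) (he : e ⊆ Set.Iio δ) :
    (IsClubIn e δ → IsClubIn (E ∩ Set.Iio δ) δ →
      IsClubIn (gl e E) δ ∧ otp (gl e E) ≤ otp e) ∧
    (IsClosedIn e δ → IsClubIn (E ∩ Set.Iio δ) δ →
      IsClosedIn (gl e E) δ ∧ otp (gl e E) ≤ otp e) := by
  have key : IsClubIn (E ∩ Set.Iio δ) δ → IsClosedIn e δ →
      (gl e E ⊆ Set.Iio δ ∧ IsClosedIn (gl e E) δ ∧ otp (gl e E) ≤ otp e) := by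
    intro hE hec
    have hEne : E.Nonempty := by
      obtain ⟨γ, hγ, -⟩ := hE.2.1 0 hδ.pos
      exact ⟨γ, hγ.1⟩
    have hm : sInf E ∈ E := csInf_mem hEne
    have bdd : ∀ α : Ordinal, BddAbove (E ∩ Set.Iio α) :=
      fun α => ⟨α, fun x hx => hx.2.le⟩
    have hne : ∀ α : Ordinal, sInf E < α → (E ∩ Set.Iio α).Nonempty :=
      fun α h => ⟨sInf E, hm, h⟩
    have g_le : ∀ α : Ordinal, sSup (E ∩ Set.Iio α) ≤ α :=
      fun α => csSup_le' (fun x hx => hx.2.le)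
    have gmono : ∀ a b : Ordinal, sInf E < a → a ≤ b →
        sSup (E ∩ Set.Iio a) ≤ sSup (E ∩ Set.Iio b) := by
      intro a b ha hab
      exact csSup_le_csSup (bdd b) (hne a ha)
        (Set.inter_subset_inter_right _ (fun x hx => lt_of_lt_of_le hx hab))
    have gsub : gl e E ⊆ Set.Iio δ := by
      rintro x ⟨α, hα, hinf, rfl⟩
      exact lt_of_le_of_lt (g_le α) (he hα)
    have hclosed : IsClosedIn (gl e E) δ := by
      intro s hs hsne hslt
      have hw : ∀ x ∈ s, ∃ α, α ∈ e ∧ sInf E < α ∧ x = sSup (E ∩ Set.Iio α) := by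
        intro x hx
        obtain ⟨α, h1, h2, h3⟩ := hs hx
        exact ⟨α, h1, h2, h3⟩
      choose! w hw1 hw2 hw3 using hw
      have hsbdd : BddAbove s := ⟨δ, fun x hx => (gsub (hs hx)).le⟩
      obtain ⟨ε, ⟨hεE, hεδ⟩, hσε⟩ := hE.2.1 (Order.succ (sSup s)) (hδ.succ_lt hslt)
      have hσε' : sSup s < ε := lt_of_lt_of_le (Order.lt_succ (sSup s)) hσε
      have hwle : ∀ x ∈ s, w x ≤ ε := by
        intro x hx
        by_contra h
        push_neg at h
        have h1 : ε ≤ sSup (E ∩ Set.Iio (w x)) := le_csSup (bdd _) ⟨hεE, h⟩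
        rw [← hw3 x hx] at h1
        exact absurd (h1.trans (le_csSup hsbdd hx)) (not_le.2 hσε')
      have himne : (w '' s).Nonempty := hsne.image w
      have hwbdd : BddAbove (w '' s) := by
        refine ⟨ε, ?_⟩
        rintro _ ⟨x, hx, rfl⟩
        exact hwle x hx
      have hβε : sSup (w '' s) ≤ ε := csSup_le himne (by rintro _ ⟨x, hx, rfl⟩; exact hwle x hx)
      have hβδ : sSup (w '' s) < δ := lt_of_le_of_lt hβε hεδ
      have hβe : sSup (w '' s) ∈ e := by
        refine hec (w '' s) ?_ himne hβδ
        rintro _ ⟨x, hx, rfl⟩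
        exact hw1 x hx
      obtain ⟨x0, hx0⟩ := hsne
      have hinfβ : sInf E < sSup (w '' s) :=
        lt_of_lt_of_le (hw2 x0 hx0) (le_csSup hwbdd ⟨x0, hx0, rfl⟩)
      have hle1 : sSup s ≤ sSup (E ∩ Set.Iio (sSup (w '' s))) := by
        refine csSup_le ⟨x0, hx0⟩ (fun x hx => ?_)
        rw [hw3 x hx]
        exact gmono (w x) (sSup (w '' s)) (hw2 x hx) (le_csSup hwbdd ⟨x, hx, rfl⟩)
      have hle2 : sSup (E ∩ Set.Iio (sSup (w '' s))) ≤ sSup s := by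
        refine csSup_le (hne _ hinfβ) (fun ζ hζ => ?_)
        obtain ⟨a, ha, hζa⟩ := exists_lt_of_lt_csSup himne hζ.2
        obtain ⟨x, hx, rfl⟩ := ha
        have h1 : ζ ≤ sSup (E ∩ Set.Iio (w x)) := le_csSup (bdd _) ⟨hζ.1, hζa⟩
        rw [← hw3 x hx] at h1
        exact h1.trans (le_csSup hsbdd hx)
      exact ⟨sSup (w '' s), hβe, hinfβ, le_antisymm hle1 hle2⟩
    have hotp : otp (gl e E) ≤ otp e := by
      have hCs : Small.{0} (gl e E) := small_subset gsub
      have hDs : Small.{0} e := small_subset he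
      have hex : ∀ x : ↥(gl e E), ∃ α, α ∈ e ∧ sInf E < α ∧
          (x : Ordinal) = sSup (E ∩ Set.Iio α) := by
        rintro ⟨x, α, h1, h2, h3⟩
        exact ⟨α, h1, h2, h3⟩
      choose φ hφ1 hφ2 hφ3 using hex
      refine otp_le_otp hCs hDs (fun x => ⟨φ x, hφ1 x⟩) ?_
      intro x y hxy
      rw [Subtype.mk_lt_mk]
      by_contra h
      push_neg at h
      have hle : (y : Ordinal) ≤ x := by
        rw [hφ3 x, hφ3 y]
        exact gmono (φ y) (φ x) (hφ2 y) h
      exact absurd (Subtype.coe_lt_coe.2 hxy) (not_lt.2 hle)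
    exact ⟨gsub, hclosed, hotp⟩
  constructor
  · intro heclub hE
    obtain ⟨hsub, hcl, hotp⟩ := key hE heclub.2.2
    refine ⟨⟨hsub, ?_, hcl⟩, hotp⟩
    intro β hβ
    obtain ⟨ε, hε, hβε⟩ := hE.2.1 β hβ
    obtain ⟨α, hα, hεα⟩ := heclub.2.1 (Order.succ ε) (hδ.succ_lt hε.2)
    have hεα' : ε < α := lt_of_lt_of_le (Order.lt_succ ε) hεα
    have hinf : sInf E < α := lt_of_le_of_lt (csInf_le' hε.1) hεα'
    exact ⟨sSup (E ∩ Set.Iio α), ⟨α, hα, hinf, rfl⟩,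
      hβε.trans (le_csSup ⟨α, fun x hx => hx.2.le⟩ ⟨hε.1, hεα'⟩)⟩
  · intro hecl hE
    obtain ⟨-, hcl, hotp⟩ := key hE hecl
    exact ⟨hcl, hotp⟩
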